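/- Let G be a connected simple graph with n vertices, m edges and S ⊆ V(G) with |S| = σ. Then E(G_S) ≤ √(n·(2m + σ − σ²/n)) (the McClelland-type bound for self-loop graphs). -/

import Mathlib

open Finset Matrix BigOperators

lemma trace_eq_sum_eig {n : Type*} [Fintype n] [DecidableEq n] {A : Matrix n n ℝ}
    (hA : A.IsHermitian) : A.trace = ∑ i, hA.eigenvalues i := by
  conv_lhs => rw [hA.spectral_theorem, Unitary.conjStarAlgAut_apply]
  rw [Matrix.trace_mul_cycle,
    (Matrix.mem_unitaryGroup_iff').mp (Matrix.IsHermitian.eigenvectorUnitary hA).2, Matrix.one_mul,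
    Matrix.trace_diagonal]
  simp

lemma trace_sq_eq_sum_eig_sq {n : Type*} [Fintype n] [DecidableEq n] {A : Matrix n n ℝ}
    (hA : A.IsHermitian) : (A * A).trace = ∑ i, hA.eigenvalues i ^ 2 := by
  conv_lhs => rw [hA.spectral_theorem, Unitary.conjStarAlgAut_apply]
  rw [Matrix.mul_assoc, Matrix.mul_assoc, ← Matrix.mul_assoc _ (_ * _),
    ← Matrix.mul_assoc (star _),
    (Matrix.mem_unitaryGroup_iff').mp (Matrix.IsHermitian.eigenvectorUnitary hA).2, Matrix.one_mul,
    ← Matrix.mul_assoc, ← Matrix.mul_assoc, Matrix.trace_mul_cycle, ← Matrix.mul_assoc,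
    (Matrix.mem_unitaryGroup_iff').mp (Matrix.IsHermitian.eigenvectorUnitary hA).2, Matrix.one_mul,
    Matrix.diagonal_mul_diagonal, Matrix.trace_diagonal]
  simp [sq]

/-- **McClelland-type bound for self-loop graphs.** For a connected simple graph `G` on `n`
vertices with `m` edges and `S ⊆ V(G)` with `|S| = σ`, the energy
`E(G_S) = ∑ᵢ |λ_i - σ/n|` of the self-loop graph `G_S` satisfies
`E(G_S) ≤ √(n (2m + σ - σ²/n))`. -/
theorem mcclelland_bound_selfLoop {V : Type*} [Fintype V] [DecidableEq V]
    (G : SimpleGraph V) [DecidableRel G.Adj] (hconn : G.Connected) (S : Finset V)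
    (hA : (G.adjMatrix ℝ + Matrix.diagonal fun v => if v ∈ S then (1 : ℝ) else 0).IsHermitian) :
    ∑ i, |hA.eigenvalues i - (S.card : ℝ) / (Fintype.card V : ℝ)|
      ≤ Real.sqrt ((Fintype.card V : ℝ)
          * (2 * (G.edgeFinset.card : ℝ) + (S.card : ℝ)
            - (S.card : ℝ) ^ 2 / (Fintype.card V : ℝ))) := by
  have hV : Nonempty V := hconn.nonempty
  set n : ℝ := (Fintype.card V : ℝ) with hn
  have hn0 : 0 < n := by positivity
  set σ : ℝ := (S.card : ℝ) with hσ
  set m : ℝ := (G.edgeFinset.card : ℝ) with hm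
  let d : V → ℝ := fun v => if v ∈ S then (1 : ℝ) else 0
  have hd : d = fun v => if v ∈ S then (1 : ℝ) else 0 := rfl
  -- trace A = σ
  have ht1 : ∑ i, hA.eigenvalues i = σ := by
    rw [← trace_eq_sum_eig hA, Matrix.trace_add, SimpleGraph.trace_adjMatrix ℝ G,
      Matrix.trace_diagonal]
    simp [hσ]
  -- trace A² = 2m + σ
  have ht2 : ∑ i, hA.eigenvalues i ^ 2 = 2 * m + σ := by
    rw [← trace_sq_eq_sum_eig_sq hA, show (G.adjMatrix ℝ + Matrix.diagonal fun v => if v ∈ S then (1:ℝ) else 0) = G.adjMatrix ℝ + Matrix.diagonal d from rfl]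
    have hexp : (G.adjMatrix ℝ + Matrix.diagonal d) * (G.adjMatrix ℝ + Matrix.diagonal d)
        = G.adjMatrix ℝ * G.adjMatrix ℝ + G.adjMatrix ℝ * Matrix.diagonal d
          + Matrix.diagonal d * G.adjMatrix ℝ + Matrix.diagonal d * Matrix.diagonal d := by
      noncomm_ring
    rw [hexp, Matrix.trace_add, Matrix.trace_add, Matrix.trace_add]
    have h1 : (G.adjMatrix ℝ * G.adjMatrix ℝ).trace = 2 * m := by
      have : (G.adjMatrix ℝ * G.adjMatrix ℝ).trace = ∑ i, (G.degree i : ℝ) :=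
        Finset.sum_congr rfl fun i _ => G.adjMatrix_mul_self_apply_self i
      rw [this, hm]
      rw [← Nat.cast_sum]
      rw [G.sum_degrees_eq_twice_card_edges]
      push_cast
      ring
    have h2 : (G.adjMatrix ℝ * Matrix.diagonal d).trace = 0 := by
      simp [Matrix.trace, Matrix.diag, Matrix.mul_diagonal]
    have h3 : (Matrix.diagonal d * G.adjMatrix ℝ).trace = 0 := by
      refine Finset.sum_eq_zero fun x _ => ?_
      simp only [Matrix.diag, SimpleGraph.mul_adjMatrix_apply]
      refine Finset.sum_eq_zero fun u hu => ?_
      exact Matrix.diagonal_apply_ne _ fun h => G.irrefl (h ▸ (G.mem_neighborFinset _ _).mp hu)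
    have h4 : (Matrix.diagonal d * Matrix.diagonal d).trace = σ := by
      rw [Matrix.diagonal_mul_diagonal, Matrix.trace_diagonal]
      simp [hd, hσ, ite_and]
    rw [h1, h2, h3, h4]; ring
  -- sum of squared deviations
  have hsq : ∑ i, (hA.eigenvalues i - σ / n) ^ 2 = 2 * m + σ - σ ^ 2 / n := by
    have : ∑ i, (hA.eigenvalues i - σ / n) ^ 2
        = ∑ i, hA.eigenvalues i ^ 2 - 2 * (σ / n) * ∑ i, hA.eigenvalues i
          + (Fintype.card V : ℝ) * (σ / n) ^ 2 := by
      rw [Finset.sum_congr rfl (fun i _ => by ring :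
        ∀ i ∈ Finset.univ, (hA.eigenvalues i - σ / n) ^ 2
          = hA.eigenvalues i ^ 2 - 2 * (σ / n) * hA.eigenvalues i + (σ / n) ^ 2)]
      rw [Finset.sum_add_distrib, Finset.sum_sub_distrib, ← Finset.mul_sum,
        Finset.sum_const, Finset.card_univ, nsmul_eq_mul]
    rw [this, ht1, ht2, ← hn]
    field_simp
    ring
  -- Cauchy–Schwarz
  have hcs : (∑ i, |hA.eigenvalues i - σ / n|) ^ 2
      ≤ n * (2 * m + σ - σ ^ 2 / n) := by
    have := sq_sum_le_card_mul_sum_sq (s := (Finset.univ : Finset V))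
      (f := fun i => |hA.eigenvalues i - σ / n|)
    simp only [Finset.card_univ, sq_abs] at this
    calc (∑ i, |hA.eigenvalues i - σ / n|) ^ 2
        ≤ (Fintype.card V : ℝ) * ∑ i, (hA.eigenvalues i - σ / n) ^ 2 := this
      _ = n * (2 * m + σ - σ ^ 2 / n) := by rw [hsq, hn]
  have hnonneg : 0 ≤ ∑ i, |hA.eigenvalues i - σ / n| :=
    Finset.sum_nonneg fun i _ => abs_nonneg _
  rw [show (Fintype.card V : ℝ) * (2 * (G.edgeFinset.card : ℝ) + (S.card : ℝ)
      - (S.card : ℝ) ^ 2 / (Fintype.card V : ℝ)) = n * (2 * m + σ - σ ^ 2 / n) from rfl]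
  exact (Real.le_sqrt hnonneg (le_trans (sq_nonneg _) hcs)).mpr hcs
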